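/- Let T be a compact metric space and g : T → T a continuous surjective map. If the periodic points of g are dense in NW(g), then the periodic points of the shift map ĝ : Π_g → Π_g are dense in NW(ĝ). -/

import Mathlib

/-- A point `x` is non-wandering for `h` if for every neighborhood `U` of `x`
there is `n ≥ 1` with `h^n(U) ∩ U ≠ ∅`. -/
def NonWandering {X : Type*} [TopologicalSpace X] (h : X → X) (x : X) : Prop :=
  ∀ U ∈ nhds x, ∃ n ≥ 1, (h^[n] '' U ∩ U).Nonempty

/-- The inverse limit Π_g of a map g : T → T. -/
abbrev InvLim {T : Type*} (g : T → T) : Type _ :=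
  {t : ℕ → T // ∀ i : ℕ, g (t (i + 1)) = t i}

/-- The shift map ĝ : Π_g → Π_g, ĝ(t_0, t_1, …) = (g(t_0), t_0, t_1, …). -/
def shiftMap {T : Type*} (g : T → T) (t : InvLim g) : InvLim g :=
  ⟨fun i => Nat.casesOn i (g (t.1 0)) fun j => t.1 j, by
    intro i
    cases i with
    | zero => rfl
    | succ j => exact t.2 j⟩

-- Auxiliary lemmas
lemma shift_coord {T : Type*} (g : T → T) (t : InvLim g) (i : ℕ) :
    (shiftMap g t).1 i = g (t.1 i) := by
  cases i with
  | zero => rfl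
  | succ j => exact (t.2 j).symm

lemma shift_iter_coord {T : Type*} (g : T → T) (t : InvLim g) (k i : ℕ) :
    ((shiftMap g)^[k] t).1 i = g^[k] (t.1 i) := by
  induction k generalizing t with
  | zero => rfl
  | succ n ih =>
    rw [Function.iterate_succ_apply, ih, shift_coord, ← Function.iterate_succ_apply]

lemma coord_back {T : Type*} (g : T → T) (t : InvLim g) (i k : ℕ) :
    g^[k] (t.1 (i + k)) = t.1 i := by
  induction k with
  | zero => rfl
  | succ n ih =>
    rw [Function.iterate_succ_apply, ← Nat.add_assoc, t.2 (i + n), ih]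

/-- if the periodic points of g are dense in NW(g), then the
periodic points of the shift map ĝ are dense in NW(ĝ). -/
theorem stmt13 {T : Type*} [MetricSpace T] [CompactSpace T]
    (g : T → T) (hgc : Continuous g) (hgs : Function.Surjective g)
    (hdense : {x | NonWandering g x} ⊆ closure {x | ∃ m ≥ 1, g^[m] x = x}) :
    {x : InvLim g | NonWandering (shiftMap g) x} ⊆
      closure {x : InvLim g | ∃ m ≥ 1, (shiftMap g)^[m] x = x} := by
  intro x hx
  rw [mem_closure_iff_nhds]
  intro W hW
  replace hW := (mem_nhds_subtype {t : ℕ → T | ∀ i : ℕ, g (t (i + 1)) = t i} x W).mp hW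
  obtain ⟨W', hW', hsub⟩ := hW
  rw [nhds_pi, Filter.mem_pi'] at hW'
  obtain ⟨I, U, hU, hpi⟩ := hW'
  set N := I.sup id with hN
  have hIle : ∀ i ∈ I, i ≤ N := fun i hi => Finset.le_sup (f := id) hi
  clear_value N
  have hxN : ∀ i ∈ I, g^[N - i] (x.1 N) = x.1 i := by
    intro i hi
    have h1 : i + (N - i) = N := by have := hIle i hi; omega
    have h2 := coord_back g x i (N - i)
    rwa [h1] at h2
  -- V : neighborhood of x.1 N
  have hV : (⋂ i ∈ I, g^[N - i] ⁻¹' U i) ∈ nhds (x.1 N) := by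
    rw [Filter.biInter_finset_mem]
    intro i hi
    apply ContinuousAt.preimage_mem_nhds (hgc.iterate (N - i)).continuousAt
    rw [hxN i hi]
    exact hU i
  -- x.1 N is nonwandering for g
  have hNW : NonWandering g (x.1 N) := by
    intro A hA
    have hAx : (fun t : InvLim g => t.1 N) ⁻¹' A ∈ nhds x :=
      ContinuousAt.preimage_mem_nhds
        ((continuous_apply N).comp continuous_subtype_val).continuousAt hA
    obtain ⟨n, hn, z, ⟨w, hw, hwz⟩, hz⟩ := hx _ hAx
    exact ⟨n, hn, z.1 N, ⟨w.1 N, hw, by rw [← hwz, shift_iter_coord]⟩, hz⟩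
  obtain ⟨p, hpV, m, hm, hp⟩ := mem_closure_iff_nhds.mp (hdense hNW) _ hV
  have hpmul : ∀ k, g^[m * k] p = p := by
    intro k
    rw [Function.iterate_mul]
    exact Function.iterate_fixed hp k
  -- the periodic point of the shift map
  have hyprop : ∀ j : ℕ, g (g^[N + m * (j + 1) - (j + 1)] p) = g^[N + m * j - j] p := by
    intro j
    have h1 : N + m * (j + 1) - (j + 1) + 1 = (N + m * j - j) + m := by
      obtain ⟨k, hk⟩ : ∃ k, m * j = k := ⟨_, rfl⟩
      have hjk : j ≤ k := hk ▸ Nat.le_mul_of_pos_left j hm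
      rw [Nat.mul_succ, hk]
      omega
    rw [← Function.iterate_succ_apply' g, Nat.succ_eq_add_one, h1,
      Function.iterate_add_apply, hp]
  refine ⟨⟨fun j => g^[N + m * j - j] p, hyprop⟩, ?_, m, hm, ?_⟩
  · -- membership in W
    apply hsub
    apply hpi
    intro i hi
    change U i _
    have h1 : N + m * i - i = (N - i) + m * i := by
      obtain ⟨k, hk⟩ : ∃ k, m * i = k := ⟨_, rfl⟩
      have hik : i ≤ k := hk ▸ Nat.le_mul_of_pos_left i hm
      have := hIle i hi
      rw [hk]
      omega
    show g^[N + m * i - i] p ∈ U i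
    rw [h1, Function.iterate_add_apply, hpmul i]
    exact Set.mem_iInter₂.mp hpV i hi
  · -- periodicity
    apply Subtype.ext
    funext i
    rw [shift_iter_coord]
    show g^[m] (g^[N + m * i - i] p) = g^[N + m * i - i] p
    rw [← Function.iterate_add_apply, Nat.add_comm, Function.iterate_add_apply, hp]
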